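/- Let G be a group of orientation-preserving homeomorphisms of [0,1] and let z ∈ (0,1) be a point whose G-orbit has integer type; enumerate O(z) increasingly as (z_n)_{n ∈ ℤ}, set I_n = (z_n, z_{n+1}), and let H_n = {g ∈ G : g(I_n) = I_n}. Then H_i = H_j for all integers i and j. -/

import Mathlib

open Set Topology Filter

/-- Orientation-preserving homeomorphisms of `[0,1]`, i.e. increasing homeomorphisms of
`[0,1]` onto itself, are exactly the order isomorphisms of the unit interval
(an increasing bijection of `[0,1]` is automatically a homeomorphism). -/
abbrev IntervalHomeo := unitInterval ≃o unitInterval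

/-- The `G`-orbit of a point `x`. -/
def orbit (G : Subgroup IntervalHomeo) (x : unitInterval) : Set unitInterval :=
  {y | ∃ g ∈ G, g x = y}

/-- A set `M` is `G`-invariant if `g(M) = M` for every `g ∈ G`. -/
def Invariant (G : Subgroup IntervalHomeo) (M : Set unitInterval) : Prop :=
  ∀ g ∈ G, ⇑(g : IntervalHomeo) '' M = M

/-- The open interval `(0,1)` inside `[0,1]`. -/
def openI : Set unitInterval := {x | (x : ℝ) ∈ Set.Ioo (0 : ℝ) 1}

/-- `M` is contained in `S` and closed in the subspace topology of `S`. -/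
def ClosedIn (S M : Set unitInterval) : Prop := M ⊆ S ∧ closure M ∩ S ⊆ M

/-- If the orbit of `z ∈ (0,1)` has integer type — an infinite set whose
accumulation set is exactly `{0,1}`, enumerated increasingly as `(z_n)_{n ∈ ℤ}` — and
`H_n = {g ∈ G : g(I_n) = I_n}` where `I_n = (z_n, z_{n+1})`, then `H_i = H_j` for all
integers `i, j`. -/

lemma myOrbitInv (G : Subgroup IntervalHomeo) (z : unitInterval) (g : IntervalHomeo)
    (hg : g ∈ G) : ⇑g '' orbit G z = orbit G z := by
  ext y
  constructor
  · rintro ⟨x, ⟨h, hh, rfl⟩, rfl⟩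
    exact ⟨g * h, mul_mem hg hh, rfl⟩
  · rintro ⟨h, hh, rfl⟩
    refine ⟨(g⁻¹ * h) z, ⟨g⁻¹ * h, mul_mem (inv_mem hg) hh, rfl⟩, ?_⟩
    show g (g⁻¹ (h z)) = h z
    exact g.apply_symm_apply _

lemma myShift (φ : ℤ → ℤ) (hm : StrictMono φ) (hs : Function.Surjective φ) :
    ∀ n, φ n = n + φ 0 := by
  have hsucc : ∀ n, φ (n + 1) = φ n + 1 := by
    intro n
    rcases hs (φ n + 1) with ⟨m, hm'⟩
    have h1 : n < m := hm.lt_iff_lt.mp (by omega)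
    have h2 : φ (n + 1) ≤ φ m := hm.le_iff_le.mpr (by omega)
    have h3 : φ n < φ (n + 1) := hm (by omega)
    omega
  intro n
  induction n using Int.induction_on with
  | zero => omega
  | succ i ih => have := hsucc (i : ℤ); push_cast; push_cast at ih; omega
  | pred i ih =>
      have := hsucc (-(i : ℤ) - 1)
      have e : -(i : ℤ) - 1 + 1 = -(i : ℤ) := by ring
      rw [e] at this
      push_cast; push_cast at ih; omega

lemma myIooEq {α : Type*} [LinearOrder α] [DenselyOrdered α] {a b c d : α}
    (hab : a < b) (h : Set.Ioo a b = Set.Ioo c d) : a = c ∧ b = d := by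
  have hcd : c < d := by
    rcases exists_between hab with ⟨x, hx1, hx2⟩
    have : x ∈ Set.Ioo c d := h ▸ (⟨hx1, hx2⟩ : x ∈ Set.Ioo a b)
    exact lt_trans this.1 this.2
  constructor
  · by_contra hne
    rcases lt_or_gt_of_ne hne with hlt | hlt
    · rcases exists_between (lt_min hab hlt) with ⟨x, hx1, hx2⟩
      have hx : x ∈ Set.Ioo a b := ⟨hx1, lt_of_lt_of_le hx2 (min_le_left _ _)⟩
      rw [h] at hx
      exact absurd hx.1 (not_lt.mpr (le_of_lt (lt_of_lt_of_le hx2 (min_le_right _ _))))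
    · rcases exists_between (lt_min hcd hlt) with ⟨x, hx1, hx2⟩
      have hx : x ∈ Set.Ioo c d := ⟨hx1, lt_of_lt_of_le hx2 (min_le_left _ _)⟩
      rw [← h] at hx
      exact absurd hx.1 (not_lt.mpr (le_of_lt (lt_of_lt_of_le hx2 (min_le_right _ _))))
  · by_contra hne
    rcases lt_or_gt_of_ne hne with hlt | hlt
    · rcases exists_between (max_lt hcd hlt) with ⟨x, hx1, hx2⟩
      have hx : x ∈ Set.Ioo c d := ⟨lt_of_le_of_lt (le_max_left _ _) hx1, hx2⟩
      rw [← h] at hx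
      exact absurd hx.2 (not_lt.mpr (le_of_lt (lt_of_le_of_lt (le_max_right _ _) hx1)))
    · rcases exists_between (max_lt hab hlt) with ⟨x, hx1, hx2⟩
      have hx : x ∈ Set.Ioo a b := ⟨lt_of_le_of_lt (le_max_left _ _) hx1, hx2⟩
      rw [h] at hx
      exact absurd hx.2 (not_lt.mpr (le_of_lt (lt_of_le_of_lt (le_max_right _ _) hx1)))

theorem stmt16 (G : Subgroup IntervalHomeo) (z : unitInterval) (hz : z ∈ openI)
    (hinf : (orbit G z).Infinite)
    (hacc : {p | AccPt p (𝓟 (orbit G z))} = {0, 1})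
    (zseq : ℤ → unitInterval) (hmono : StrictMono zseq)
    (hrange : Set.range zseq = orbit G z) :
    ∀ i j : ℤ,
      {g : IntervalHomeo | g ∈ G ∧
        ⇑g '' Set.Ioo (zseq i) (zseq (i + 1)) = Set.Ioo (zseq i) (zseq (i + 1))} =
      {g : IntervalHomeo | g ∈ G ∧
        ⇑g '' Set.Ioo (zseq j) (zseq (j + 1)) = Set.Ioo (zseq j) (zseq (j + 1))} := by
  have key : ∀ (i j : ℤ) (g : IntervalHomeo), g ∈ G →
      ⇑g '' Set.Ioo (zseq i) (zseq (i + 1)) = Set.Ioo (zseq i) (zseq (i + 1)) →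
      ⇑g '' Set.Ioo (zseq j) (zseq (j + 1)) = Set.Ioo (zseq j) (zseq (j + 1)) := by
    intro i j g hg hgi
    have hmem : ∀ n : ℤ, ∃ m : ℤ, zseq m = g (zseq n) := by
      intro n
      have h1 : g (zseq n) ∈ orbit G z := by
        rw [← myOrbitInv G z g hg]
        exact ⟨zseq n, by rw [← hrange]; exact ⟨n, rfl⟩, rfl⟩
      rw [← hrange] at h1
      exact h1
    choose φ hφ using hmem
    have hφmono : StrictMono φ := by
      intro a b hab
      have : zseq (φ a) < zseq (φ b) := by
        rw [hφ, hφ]; exact g.strictMono (hmono hab)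
      exact hmono.lt_iff_lt.mp this
    have hφsurj : Function.Surjective φ := by
      intro m
      have h1 : zseq m ∈ ⇑g '' orbit G z := by
        rw [myOrbitInv G z g hg, ← hrange]; exact ⟨m, rfl⟩
      rcases h1 with ⟨x, hx, hgx⟩
      rw [← hrange] at hx
      rcases hx with ⟨n, rfl⟩
      exact ⟨n, hmono.injective (by rw [hφ, hgx])⟩
    have hshift := myShift φ hφmono hφsurj
    have himg : ∀ n : ℤ,
        ⇑g '' Set.Ioo (zseq n) (zseq (n + 1)) = Set.Ioo (zseq (φ n)) (zseq (φ (n + 1))) := by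
      intro n
      rw [g.image_Ioo, hφ, hφ]
    have hii := hgi
    rw [himg i] at hii
    have hne : zseq (φ i) < zseq (φ (i + 1)) := hmono (hφmono (by omega))
    have heq := myIooEq hne hii
    have hφi : φ i = i := hmono.injective heq.1
    have hφ0 : φ 0 = 0 := by have := hshift i; omega
    have hφid : ∀ n, φ n = n := by intro n; have := hshift n; omega
    rw [himg j, hφid j, hφid (j + 1)]
  intro i j
  ext g
  simp only [Set.mem_setOf_eq]
  exact ⟨fun ⟨hg, h⟩ => ⟨hg, key i j g hg h⟩, fun ⟨hg, h⟩ => ⟨hg, key j i g hg h⟩⟩
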